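/- In any compository, the 2-step rule holds: for a $k$-composable pair $(A,B) \in \mathcal{C}(m) \times \mathcal{C}(n)$ and any $k \le i \le m$ and $k \le j \le n$, $A \circ_k B = A \circ_i (At_i \circ_k B) = (A \circ_k B s_j) \circ_j B$. -/

import Mathlib

open CategoryTheory Opposite

namespace Compo

/-- The object `[n]` of the simplex category. -/
abbrev sobj (n : ℕ) : SimplexCategory := SimplexCategory.mk n

/-- The "initial face" map `s_k : [k] → [n]`, `v ↦ v`. -/
def srcHom (k n : ℕ) (h : k ≤ n) : sobj k ⟶ sobj n :=
  SimplexCategory.mkHom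
    ⟨fun v => ⟨v.1, by have := v.isLt; omega⟩, fun a b hab => Fin.mk_le_mk.mpr hab⟩

/-- The "terminal face" map `t_k : [k] → [n]`, `v ↦ v + n - k`. -/
def tgtHom (k n : ℕ) (h : k ≤ n) : sobj k ⟶ sobj n :=
  SimplexCategory.mkHom
    ⟨fun v => ⟨v.1 + (n - k), by have := v.isLt; omega⟩, fun a b hab => by
      simp only [Fin.le_def] at hab ⊢; omega⟩

/-- A compository: a simplicial set equipped with compositions of `k`-composable
pairs, satisfying the identity axiom, the back-and-forth axiom, and compatibility
with degeneracy and face maps. The dimension `N` of the composite satisfies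
`m + n = N + k`. -/
structure Compository where
  X : SSet.{0}
  comp : ∀ {m n k N : ℕ} (hm : k ≤ m) (hn : k ≤ n) (_ : m + n = N + k)
    (A : X.obj (op (sobj m))) (B : X.obj (op (sobj n))),
    X.map (tgtHom k m hm).op A = X.map (srcHom k n hn).op B → X.obj (op (sobj N))
  /-- Identity axiom: `As_k ∘_k A = A`. -/
  id_left : ∀ {m k : ℕ} (hm : k ≤ m) (A : X.obj (op (sobj m))) h,
    comp (le_refl k) hm (by omega) (X.map (srcHom k m hm).op A) A h = A
  /-- Identity axiom: `A ∘_k At_k = A`. -/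
  id_right : ∀ {m k : ℕ} (hm : k ≤ m) (A : X.obj (op (sobj m))) h,
    comp hm (le_refl k) (by omega) A (X.map (tgtHom k m hm).op A) h = A
  /-- Back-and-forth axiom: `(A ∘_k B)s_{m+i} ∘_{k+i} B = A ∘_k B` for `i ≤ n - k`. -/
  back_forth_left : ∀ {m n k N : ℕ} (hm : k ≤ m) (hn : k ≤ n) (hN : m + n = N + k)
    (i : ℕ) (hi : i ≤ n - k)
    (A : X.obj (op (sobj m))) (B : X.obj (op (sobj n)))
    (hAB : X.map (tgtHom k m hm).op A = X.map (srcHom k n hn).op B)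
    (h : X.map (tgtHom (k + i) (m + i) (by omega)).op
      (X.map (srcHom (m + i) N (by omega)).op (comp hm hn hN A B hAB))
      = X.map (srcHom (k + i) n (by omega)).op B),
    comp (show k + i ≤ m + i by omega) (show k + i ≤ n by omega)
      (show (m + i) + n = N + (k + i) by omega)
      (X.map (srcHom (m + i) N (by omega)).op (comp hm hn hN A B hAB)) B h
    = comp hm hn hN A B hAB
  /-- Back-and-forth axiom: `A ∘_{k+j} (A ∘_k B)t_{n+j} = A ∘_k B` for `j ≤ m - k`. -/
  back_forth_right : ∀ {m n k N : ℕ} (hm : k ≤ m) (hn : k ≤ n) (hN : m + n = N + k)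
    (j : ℕ) (hj : j ≤ m - k)
    (A : X.obj (op (sobj m))) (B : X.obj (op (sobj n)))
    (hAB : X.map (tgtHom k m hm).op A = X.map (srcHom k n hn).op B)
    (h : X.map (tgtHom (k + j) m (by omega)).op A
      = X.map (srcHom (k + j) (n + j) (by omega)).op
        (X.map (tgtHom (n + j) N (by omega)).op (comp hm hn hN A B hAB))),
    comp (show k + j ≤ m by omega) (show k + j ≤ n + j by omega)
      (show m + (n + j) = N + (k + j) by omega)
      A (X.map (tgtHom (n + j) N (by omega)).op (comp hm hn hN A B hAB)) h
    = comp hm hn hN A B hAB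
  /-- `(A ∘_k B)η_i = Aη_i ∘_k B` for `i ≤ m - k`. -/
  comp_eta_low : ∀ {m n k N : ℕ} (hm : k ≤ m) (hn : k ≤ n) (hN : m + n = N + k)
    (i : ℕ) (hi : i ≤ m - k)
    (A : X.obj (op (sobj m))) (B : X.obj (op (sobj n)))
    (hAB : X.map (tgtHom k m hm).op A = X.map (srcHom k n hn).op B)
    (h : X.map (tgtHom k (m + 1) (by omega)).op
      (X.map (SimplexCategory.σ (⟨i, by omega⟩ : Fin (m + 1))).op A)
      = X.map (srcHom k n hn).op B),
    X.map (SimplexCategory.σ (⟨i, by omega⟩ : Fin (N + 1))).op (comp hm hn hN A B hAB)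
    = comp (show k ≤ m + 1 by omega) hn (show (m + 1) + n = (N + 1) + k by omega)
        (X.map (SimplexCategory.σ (⟨i, by omega⟩ : Fin (m + 1))).op A) B h
  /-- `(A ∘_k B)η_i = A ∘_k Bη_{i-m+k}` for `i ≥ m`. -/
  comp_eta_high : ∀ {m n k N : ℕ} (hm : k ≤ m) (hn : k ≤ n) (hN : m + n = N + k)
    (i : ℕ) (hi1 : m ≤ i) (hi2 : i ≤ N)
    (A : X.obj (op (sobj m))) (B : X.obj (op (sobj n)))
    (hAB : X.map (tgtHom k m hm).op A = X.map (srcHom k n hn).op B)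
    (h : X.map (tgtHom k m hm).op A
      = X.map (srcHom k (n + 1) (by omega)).op
        (X.map (SimplexCategory.σ (⟨i - m + k, by omega⟩ : Fin (n + 1))).op B)),
    X.map (SimplexCategory.σ (⟨i, by omega⟩ : Fin (N + 1))).op (comp hm hn hN A B hAB)
    = comp hm (show k ≤ n + 1 by omega) (show m + (n + 1) = (N + 1) + k by omega)
        A (X.map (SimplexCategory.σ (⟨i - m + k, by omega⟩ : Fin (n + 1))).op B) h
  /-- `(A ∘_k B)η_i = Aη_i ∘_{k+1} Bη_{i-m+k}` for `m - k ≤ i ≤ m`. -/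
  comp_eta_mid : ∀ {m n k N : ℕ} (hm : k ≤ m) (hn : k ≤ n) (hN : m + n = N + k)
    (i : ℕ) (hi1 : m - k ≤ i) (hi2 : i ≤ m)
    (A : X.obj (op (sobj m))) (B : X.obj (op (sobj n)))
    (hAB : X.map (tgtHom k m hm).op A = X.map (srcHom k n hn).op B)
    (h : X.map (tgtHom (k + 1) (m + 1) (by omega)).op
      (X.map (SimplexCategory.σ (⟨i, by omega⟩ : Fin (m + 1))).op A)
      = X.map (srcHom (k + 1) (n + 1) (by omega)).op
        (X.map (SimplexCategory.σ (⟨i - m + k, by omega⟩ : Fin (n + 1))).op B)),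
    X.map (SimplexCategory.σ (⟨i, by omega⟩ : Fin (N + 1))).op (comp hm hn hN A B hAB)
    = comp (show k + 1 ≤ m + 1 by omega) (show k + 1 ≤ n + 1 by omega)
        (show (m + 1) + (n + 1) = (N + 1) + (k + 1) by omega)
        (X.map (SimplexCategory.σ (⟨i, by omega⟩ : Fin (m + 1))).op A)
        (X.map (SimplexCategory.σ (⟨i - m + k, by omega⟩ : Fin (n + 1))).op B) h
  /-- `(A ∘_k B)∂_i = A∂_i ∘_k B` for `i < m - k` (here `A` is an `(m+1)`-simplex). -/
  comp_delta_low : ∀ {m n k N : ℕ} (hm : k ≤ m + 1) (hn : k ≤ n)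
    (hN : (m + 1) + n = (N + 1) + k)
    (i : ℕ) (hi : i < m + 1 - k)
    (A : X.obj (op (sobj (m + 1)))) (B : X.obj (op (sobj n)))
    (hAB : X.map (tgtHom k (m + 1) hm).op A = X.map (srcHom k n hn).op B)
    (h : X.map (tgtHom k m (by omega)).op
      (X.map (SimplexCategory.δ (⟨i, by omega⟩ : Fin (m + 2))).op A)
      = X.map (srcHom k n hn).op B),
    X.map (SimplexCategory.δ (⟨i, by omega⟩ : Fin (N + 2))).op (comp hm hn hN A B hAB)
    = comp (show k ≤ m by omega) hn (show m + n = N + k by omega)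
        (X.map (SimplexCategory.δ (⟨i, by omega⟩ : Fin (m + 2))).op A) B h
  /-- `(A ∘_k B)∂_i = A ∘_k B∂_{i-m+k}` for `i > m` (here `B` is an `(n+1)`-simplex). -/
  comp_delta_high : ∀ {m n k N : ℕ} (hm : k ≤ m) (hn : k ≤ n + 1)
    (hN : m + (n + 1) = (N + 1) + k)
    (i : ℕ) (hi1 : m < i) (hi2 : i ≤ N + 1)
    (A : X.obj (op (sobj m))) (B : X.obj (op (sobj (n + 1))))
    (hAB : X.map (tgtHom k m hm).op A = X.map (srcHom k (n + 1) hn).op B)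
    (h : X.map (tgtHom k m hm).op A
      = X.map (srcHom k n (by omega)).op
        (X.map (SimplexCategory.δ (⟨i - m + k, by omega⟩ : Fin (n + 2))).op B)),
    X.map (SimplexCategory.δ (⟨i, by omega⟩ : Fin (N + 2))).op (comp hm hn hN A B hAB)
    = comp hm (show k ≤ n by omega) (show m + n = N + k by omega)
        A (X.map (SimplexCategory.δ (⟨i - m + k, by omega⟩ : Fin (n + 2))).op B) h

end Compo

namespace Compo

lemma tgtHom_self (n : ℕ) (h : n ≤ n) : tgtHom n n h = 𝟙 _ := by
  apply SimplexCategory.Hom.ext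
  ext v
  simp [tgtHom]

lemma srcHom_self (n : ℕ) (h : n ≤ n) : srcHom n n h = 𝟙 _ := by
  apply SimplexCategory.Hom.ext
  ext v
  simp [srcHom]
  rfl

lemma tgtHom_trans {a b c : ℕ} (hab : a ≤ b) (hbc : b ≤ c) :
    tgtHom a b hab ≫ tgtHom b c hbc = tgtHom a c (hab.trans hbc) := by
  apply SimplexCategory.Hom.ext
  ext v
  simp [tgtHom, SimplexCategory.Hom.comp, SimplexCategory.mkHom]
  show _ + _ + _ = _ + _
  omega

lemma srcHom_trans {a b c : ℕ} (hab : a ≤ b) (hbc : b ≤ c) :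
    srcHom a b hab ≫ srcHom b c hbc = srcHom a c (hab.trans hbc) := by
  apply SimplexCategory.Hom.ext
  ext v
  simp [srcHom, SimplexCategory.Hom.comp, SimplexCategory.mkHom]
  rfl

lemma tgtHom_step (j : ℕ) (h : j ≤ j + 1) :
    tgtHom j (j + 1) h = SimplexCategory.δ (⟨0, by omega⟩ : Fin (j + 2)) := by
  apply SimplexCategory.Hom.ext
  ext v
  simp [tgtHom, SimplexCategory.δ, Fin.succAbove]

lemma srcHom_step (j : ℕ) (h : j ≤ j + 1) :
    srcHom j (j + 1) h = SimplexCategory.δ (⟨j + 1, by omega⟩ : Fin (j + 2)) := by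
  apply SimplexCategory.Hom.ext
  ext v
  have := v.isLt
  simp [srcHom, SimplexCategory.δ, Fin.succAbove, Fin.lt_def]
  show (v : ℕ) = _
  rw [if_pos (by simp at this; omega)]
  rfl

lemma Compository.map_map (𝒞 : Compository) {a b c : SimplexCategory} (f : a ⟶ b) (g : b ⟶ c)
    (x : 𝒞.X.obj (op c)) : 𝒞.X.map (f ≫ g).op x = 𝒞.X.map f.op (𝒞.X.map g.op x) := by
  rw [op_comp, 𝒞.X.map_comp]; rfl

lemma Compository.comp_congr (𝒞 : Compository) {m n k N : ℕ} (hm : k ≤ m) (hn : k ≤ n)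
    (hN : m + n = N + k) {A A' : 𝒞.X.obj (op (sobj m))} {B B' : 𝒞.X.obj (op (sobj n))}
    (hA : A = A') (hB : B = B') (h h') :
    𝒞.comp hm hn hN A B h = 𝒞.comp hm hn hN A' B' h' := by
  subst hA; subst hB; rfl

/-- Derived fact: `(A ∘_k B) t_M = A t_i ∘_k B` where `M = i + n - k`. -/
lemma two_step_aux1 (𝒞 : Compository) (d : ℕ) :
    ∀ {m n k N : ℕ} (hm : k ≤ m) (hn : k ≤ n) (hN : m + n = N + k)
      (A : 𝒞.X.obj (op (sobj m))) (B : 𝒞.X.obj (op (sobj n)))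
      (hAB : 𝒞.X.map (tgtHom k m hm).op A = 𝒞.X.map (srcHom k n hn).op B)
      (i : ℕ) (hd : i + d = m) (hki : k ≤ i) (him : i ≤ m)
      (M : ℕ) (hM : i + n = M + k) (hMN : M ≤ N) h₁,
      𝒞.comp hki hn hM (𝒞.X.map (tgtHom i m him).op A) B h₁
      = 𝒞.X.map (tgtHom M N hMN).op (𝒞.comp hm hn hN A B hAB) := by
  induction d with
  | zero =>
    intro m n k N hm hn hN A B hAB i hd hki him M hM hMN h₁
    obtain rfl : i = m := by omega
    obtain rfl : M = N := by omega
    have e : 𝒞.X.map (tgtHom i i him).op A = A := by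
      rw [tgtHom_self]; simp
    have e2 : 𝒞.X.map (tgtHom M M hMN).op (𝒞.comp hm hn hN A B hAB)
        = 𝒞.comp hm hn hN A B hAB := by
      rw [tgtHom_self]; simp
    rw [e2]
    exact 𝒞.comp_congr _ _ _ e rfl _ hAB
  | succ d ih =>
    intro m n k N hm hn hN A B hAB i hd hki him M hM hMN h₁
    have hi1m : i + 1 ≤ m := by omega
    have hk1 : k ≤ i + 1 := by omega
    have hM1N : M + 1 ≤ N := by omega
    have hM1 : (i + 1) + n = (M + 1) + k := by omega
    have hA1 : 𝒞.X.map (tgtHom k (i + 1) hk1).op (𝒞.X.map (tgtHom (i + 1) m hi1m).op A)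
        = 𝒞.X.map (srcHom k n hn).op B := by
      rw [← 𝒞.map_map, tgtHom_trans hk1 hi1m]; exact hAB
    have key := ih hm hn hN A B hAB (i + 1) (by omega) hk1 hi1m (M + 1) hM1 hM1N hA1
    have eA : 𝒞.X.map (tgtHom i m him).op A
        = 𝒞.X.map (SimplexCategory.δ (⟨0, by omega⟩ : Fin (i + 2))).op
            (𝒞.X.map (tgtHom (i + 1) m hi1m).op A) := by
      rw [← 𝒞.map_map, ← tgtHom_step i (by omega),
        tgtHom_trans (show i ≤ i + 1 by omega) hi1m]
    have hdl := 𝒞.comp_delta_low (m := i) hk1 hn hM1 0 (by omega)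
      (𝒞.X.map (tgtHom (i + 1) m hi1m).op A) B hA1 (by rw [← eA]; exact h₁)
    calc 𝒞.comp hki hn hM (𝒞.X.map (tgtHom i m him).op A) B h₁
        = 𝒞.comp hki hn hM
            (𝒞.X.map (SimplexCategory.δ (⟨0, by omega⟩ : Fin (i + 2))).op
              (𝒞.X.map (tgtHom (i + 1) m hi1m).op A)) B (by rw [← eA]; exact h₁) :=
          𝒞.comp_congr _ _ _ eA rfl _ _
      _ = 𝒞.X.map (SimplexCategory.δ (⟨0, by omega⟩ : Fin (M + 2))).op
            (𝒞.comp hk1 hn hM1 (𝒞.X.map (tgtHom (i + 1) m hi1m).op A) B hA1) := hdl.symm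
      _ = 𝒞.X.map (SimplexCategory.δ (⟨0, by omega⟩ : Fin (M + 2))).op
            (𝒞.X.map (tgtHom (M + 1) N hM1N).op (𝒞.comp hm hn hN A B hAB)) := by rw [key]
      _ = 𝒞.X.map (tgtHom M N hMN).op (𝒞.comp hm hn hN A B hAB) := by
          rw [← 𝒞.map_map, ← tgtHom_step M (by omega),
            tgtHom_trans (show M ≤ M + 1 by omega) hM1N]

/-- Derived fact: `(A ∘_k B) s_M = A ∘_k B s_j` where `M = m + j - k`. -/
lemma two_step_aux2 (𝒞 : Compository) (d : ℕ) :
    ∀ {m n k N : ℕ} (hm : k ≤ m) (hn : k ≤ n) (hN : m + n = N + k)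
      (A : 𝒞.X.obj (op (sobj m))) (B : 𝒞.X.obj (op (sobj n)))
      (hAB : 𝒞.X.map (tgtHom k m hm).op A = 𝒞.X.map (srcHom k n hn).op B)
      (j : ℕ) (hd : j + d = n) (hkj : k ≤ j) (hjn : j ≤ n)
      (M : ℕ) (hM : m + j = M + k) (hMN : M ≤ N) h₁,
      𝒞.comp hm hkj hM A (𝒞.X.map (srcHom j n hjn).op B) h₁
      = 𝒞.X.map (srcHom M N hMN).op (𝒞.comp hm hn hN A B hAB) := by
  induction d with
  | zero =>
    intro m n k N hm hn hN A B hAB j hd hkj hjn M hM hMN h₁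
    obtain rfl : j = n := by omega
    obtain rfl : M = N := by omega
    have e : 𝒞.X.map (srcHom j j hjn).op B = B := by
      rw [srcHom_self]; simp
    have e2 : 𝒞.X.map (srcHom M M hMN).op (𝒞.comp hm hn hN A B hAB)
        = 𝒞.comp hm hn hN A B hAB := by
      rw [srcHom_self]; simp
    rw [e2]
    exact 𝒞.comp_congr _ _ _ rfl e _ hAB
  | succ d ih =>
    intro m n k N hm hn hN A B hAB j hd hkj hjn M hM hMN h₁
    have hj1n : j + 1 ≤ n := by omega
    have hk1 : k ≤ j + 1 := by omega
    have hM1N : M + 1 ≤ N := by omega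
    have hM1 : m + (j + 1) = (M + 1) + k := by omega
    have hB1 : 𝒞.X.map (tgtHom k m hm).op A
        = 𝒞.X.map (srcHom k (j + 1) hk1).op (𝒞.X.map (srcHom (j + 1) n hj1n).op B) := by
      rw [← 𝒞.map_map, srcHom_trans hk1 hj1n]; exact hAB
    have key := ih hm hn hN A B hAB (j + 1) (by omega) hk1 hj1n (M + 1) hM1 hM1N hB1
    have eB : 𝒞.X.map (srcHom j n hjn).op B
        = 𝒞.X.map (SimplexCategory.δ (⟨j + 1, by omega⟩ : Fin (j + 2))).op
            (𝒞.X.map (srcHom (j + 1) n hj1n).op B) := by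
      rw [← 𝒞.map_map, ← srcHom_step j (by omega),
        srcHom_trans (show j ≤ j + 1 by omega) hj1n]
    have efin : (⟨M + 1 - m + k, by omega⟩ : Fin (j + 2)) = ⟨j + 1, by omega⟩ :=
      Fin.ext (by simp; omega)
    have eB' : 𝒞.X.map (srcHom j n hjn).op B
        = 𝒞.X.map (SimplexCategory.δ (⟨M + 1 - m + k, by omega⟩ : Fin (j + 2))).op
            (𝒞.X.map (srcHom (j + 1) n hj1n).op B) := by rw [efin]; exact eB
    have hdh := 𝒞.comp_delta_high (n := j) hm hk1 hM1 (M + 1) (by omega) (by omega)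
      A (𝒞.X.map (srcHom (j + 1) n hj1n).op B) hB1 (by rw [← eB']; exact h₁)
    calc 𝒞.comp hm hkj hM A (𝒞.X.map (srcHom j n hjn).op B) h₁
        = 𝒞.comp hm hkj hM A
            (𝒞.X.map (SimplexCategory.δ (⟨M + 1 - m + k, by omega⟩ : Fin (j + 2))).op
              (𝒞.X.map (srcHom (j + 1) n hj1n).op B)) (by rw [← eB']; exact h₁) :=
          𝒞.comp_congr _ _ _ rfl eB' _ _
      _ = 𝒞.X.map (SimplexCategory.δ (⟨M + 1, by omega⟩ : Fin (M + 2))).op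
            (𝒞.comp hm hk1 hM1 A (𝒞.X.map (srcHom (j + 1) n hj1n).op B) hB1) := hdh.symm
      _ = 𝒞.X.map (SimplexCategory.δ (⟨M + 1, by omega⟩ : Fin (M + 2))).op
            (𝒞.X.map (srcHom (M + 1) N hM1N).op (𝒞.comp hm hn hN A B hAB)) := by rw [key]
      _ = 𝒞.X.map (srcHom M N hMN).op (𝒞.comp hm hn hN A B hAB) := by
          rw [← 𝒞.map_map, ← srcHom_step M (by omega),
            srcHom_trans (show M ≤ M + 1 by omega) hM1N]

end Compo

open Compo in
/-- the 2-step rule in a compository: for `k ≤ i ≤ m` and `k ≤ j ≤ n`,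
`A ∘_k B = A ∘_i (At_i ∘_k B) = (A ∘_k Bs_j) ∘_j B`. -/
theorem compository_two_step (𝒞 : Compository) {m n k N : ℕ}
    (hm : k ≤ m) (hn : k ≤ n) (hN : m + n = N + k)
    (A : 𝒞.X.obj (op (sobj m))) (B : 𝒞.X.obj (op (sobj n)))
    (hAB : 𝒞.X.map (tgtHom k m hm).op A = 𝒞.X.map (srcHom k n hn).op B)
    (i j : ℕ) (hki : k ≤ i) (him : i ≤ m) (hkj : k ≤ j) (hjn : j ≤ n) :
    (∀ (M : ℕ) (hM : i + n = M + k) h₁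
      (h₂ : 𝒞.X.map (tgtHom i m him).op A
        = 𝒞.X.map (srcHom i M (by omega)).op
          (𝒞.comp hki hn hM (𝒞.X.map (tgtHom i m him).op A) B h₁)),
      𝒞.comp him (show i ≤ M by omega) (show m + M = N + i by omega) A
        (𝒞.comp hki hn hM (𝒞.X.map (tgtHom i m him).op A) B h₁) h₂
      = 𝒞.comp hm hn hN A B hAB) ∧
    (∀ (M : ℕ) (hM : m + j = M + k) h₁
      (h₂ : 𝒞.X.map (tgtHom j M (by omega)).op
        (𝒞.comp hm hkj hM A (𝒞.X.map (srcHom j n hjn).op B) h₁)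
        = 𝒞.X.map (srcHom j n hjn).op B),
      𝒞.comp (show j ≤ M by omega) hjn (show M + n = N + j by omega)
        (𝒞.comp hm hkj hM A (𝒞.X.map (srcHom j n hjn).op B) h₁) B h₂
      = 𝒞.comp hm hn hN A B hAB) := by
  constructor
  · intro M hM h₁ h₂
    obtain ⟨j', rfl⟩ : ∃ j', i = k + j' := ⟨i - k, by omega⟩
    obtain rfl : M = n + j' := by omega
    have key := two_step_aux1 𝒞 (m - (k + j')) hm hn hN A B hAB (k + j') (by omega)
      hki him (n + j') hM (by omega) h₁
    calc 𝒞.comp him (show k + j' ≤ n + j' by omega)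
          (show m + (n + j') = N + (k + j') by omega)
          A (𝒞.comp hki hn hM (𝒞.X.map (tgtHom (k + j') m him).op A) B h₁) h₂
        = 𝒞.comp him (show k + j' ≤ n + j' by omega)
            (show m + (n + j') = N + (k + j') by omega)
            A (𝒞.X.map (tgtHom (n + j') N (by omega)).op (𝒞.comp hm hn hN A B hAB))
            (by rw [← key]; exact h₂) :=
          𝒞.comp_congr _ _ _ rfl key _ _
      _ = 𝒞.comp hm hn hN A B hAB :=
          𝒞.back_forth_right hm hn hN j' (by omega) A B hAB _
  · intro M hM h₁ h₂
    obtain ⟨j'', rfl⟩ : ∃ j'', j = k + j'' := ⟨j - k, by omega⟩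
    obtain rfl : M = m + j'' := by omega
    have key := two_step_aux2 𝒞 (n - (k + j'')) hm hn hN A B hAB (k + j'') (by omega)
      hkj hjn (m + j'') hM (by omega) h₁
    calc 𝒞.comp (show k + j'' ≤ m + j'' by omega) hjn
          (show (m + j'') + n = N + (k + j'') by omega)
          (𝒞.comp hm hkj hM A (𝒞.X.map (srcHom (k + j'') n hjn).op B) h₁) B h₂
        = 𝒞.comp (show k + j'' ≤ m + j'' by omega) hjn
            (show (m + j'') + n = N + (k + j'') by omega)
            (𝒞.X.map (srcHom (m + j'') N (by omega)).op (𝒞.comp hm hn hN A B hAB)) B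
            (by rw [← key]; exact h₂) :=
          𝒞.comp_congr _ _ _ key rfl _ _
      _ = 𝒞.comp hm hn hN A B hAB :=
          𝒞.back_forth_left hm hn hN j'' (by omega) A B hAB _
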